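/- Let n ≥ 2 be even and set V = 2^{n/2}. The polynomial H(x) = (x^2 - V^2)((x-2)^2 - V^2) is nonnegative at every even integer x. Consequently, for any Boolean function f : F_2^n → F_2 with f(0) = 0, using Σ_a W_f(a) = 2^n and Σ_a W_f(a)^2 = 2^{2n}, one has Σ_{a ∈ F_2^n} (W_f(a)^4 - 4 W_f(a)^3) ≥ 2^{3n} - 4·2^{2n}. -/

import Mathlib

lemma aux_pow_add : ∀ c d : ZMod 2, (-1:ℤ)^((c+d).val) = ((-1:ℤ))^c.val * ((-1:ℤ))^d.val := by decide

lemma aux_orth (n : ℕ) (x : Fin n → ZMod 2) (hx : x ≠ 0) :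
    ∑ a : Fin n → ZMod 2, (-1:ℤ)^((dotProduct a x).val) = 0 := by
  obtain ⟨i, hi⟩ : ∃ i, x i ≠ 0 := by
    by_contra h; push_neg at h; exact hx (funext h)
  have hxi : x i = 1 := by
    have h1 : ∀ c : ZMod 2, c ≠ 0 → c = 1 := by decide
    exact h1 _ hi
  set s : Fin n → ZMod 2 := Pi.single i 1 with hs
  have flip : ∀ c : ZMod 2, (-1:ℤ)^((c+1).val) = -((-1:ℤ))^c.val := by decide
  have key : ∀ a : Fin n → ZMod 2,
      (-1:ℤ)^((dotProduct (a + s) x).val) = -(-1:ℤ)^((dotProduct a x).val) := by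
    intro a
    rw [add_dotProduct, hs, single_dotProduct, hxi, one_mul, flip]
  have h2 : ∑ a : Fin n → ZMod 2, (-1:ℤ)^((dotProduct (a+s) x).val)
      = ∑ a : Fin n → ZMod 2, (-1:ℤ)^((dotProduct a x).val) :=
    Fintype.sum_equiv (Equiv.addRight s) _ _ (fun a => rfl)
  simp only [key, Finset.sum_neg_distrib] at h2
  linarith

lemma aux_card (n : ℕ) : (Fintype.card (Fin n → ZMod 2)) = 2^n := by
  simp [Fintype.card_fun]

lemma aux_orth_full (n : ℕ) (x : Fin n → ZMod 2) :
    ∑ a : Fin n → ZMod 2, (-1:ℤ)^((dotProduct a x).val) = if x = 0 then 2^n else 0 := by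
  by_cases hx : x = 0
  · subst hx
    simp [dotProduct_zero, Finset.card_univ, aux_card]
  · rw [if_neg hx]; exact aux_orth n x hx

lemma aux_sum1 (n : ℕ) (f : (Fin n → ZMod 2) → ZMod 2) (hf : f 0 = 0)
    (W : (Fin n → ZMod 2) → ℤ)
    (hW : ∀ a, W a = ∑ x : Fin n → ZMod 2, (-1 : ℤ) ^ (f x + dotProduct a x).val) :
    ∑ a : Fin n → ZMod 2, W a = 2^n := by
  have : ∑ a : Fin n → ZMod 2, W a
      = ∑ x : Fin n → ZMod 2, ∑ a : Fin n → ZMod 2, (-1:ℤ)^((f x + dotProduct a x).val) := by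
    simp only [hW]; exact Finset.sum_comm
  rw [this]
  have step : ∀ x : Fin n → ZMod 2,
      ∑ a : Fin n → ZMod 2, (-1:ℤ)^((f x + dotProduct a x).val)
      = if x = 0 then 2^n else 0 := by
    intro x
    have : ∑ a : Fin n → ZMod 2, (-1:ℤ)^((f x + dotProduct a x).val)
        = (-1:ℤ)^(f x).val * ∑ a : Fin n → ZMod 2, (-1:ℤ)^((dotProduct a x).val) := by
      rw [Finset.mul_sum]
      exact Finset.sum_congr rfl fun a _ => by rw [aux_pow_add]
    rw [this, aux_orth_full]
    by_cases hx : x = 0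
    · subst hx; simp [hf]
    · simp [hx]
  simp only [step]
  simp

lemma aux_addself (n : ℕ) (x y : Fin n → ZMod 2) : x + y = 0 ↔ x = y := by
  constructor
  · intro h
    funext i
    have := congrFun h i
    simp only [Pi.add_apply, Pi.zero_apply] at this
    have h2 : ∀ c d : ZMod 2, c + d = 0 → c = d := by decide
    exact h2 _ _ this
  · intro h; subst h; funext i; simp only [Pi.add_apply, Pi.zero_apply]
    have h2 : ∀ c : ZMod 2, c + c = 0 := by decide
    exact h2 _

lemma aux_sum2 (n : ℕ) (f : (Fin n → ZMod 2) → ZMod 2)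
    (W : (Fin n → ZMod 2) → ℤ)
    (hW : ∀ a, W a = ∑ x : Fin n → ZMod 2, (-1 : ℤ) ^ (f x + dotProduct a x).val) :
    ∑ a : Fin n → ZMod 2, (W a)^2 = 2^(2*n) := by
  have expand : ∀ a, (W a)^2 = ∑ x : Fin n → ZMod 2, ∑ y : Fin n → ZMod 2,
      (-1:ℤ)^((f x + f y).val) * (-1:ℤ)^((dotProduct a (x + y)).val) := by
    intro a
    rw [sq, hW, Finset.sum_mul_sum]
    refine Finset.sum_congr rfl fun x _ => Finset.sum_congr rfl fun y _ => ?_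
    rw [← aux_pow_add, ← aux_pow_add]
    have heq : f x + dotProduct a x + (f y + dotProduct a y)
        = f x + f y + dotProduct a (x + y) := by
      rw [dotProduct_add]; ring
    rw [heq]
  have swap : ∑ a : Fin n → ZMod 2, (W a)^2
      = ∑ x : Fin n → ZMod 2, ∑ y : Fin n → ZMod 2,
          (-1:ℤ)^((f x + f y).val) * ∑ a : Fin n → ZMod 2, (-1:ℤ)^((dotProduct a (x + y)).val) := by
    simp only [expand]
    rw [Finset.sum_comm]
    refine Finset.sum_congr rfl fun x _ => ?_
    rw [Finset.sum_comm]
    exact Finset.sum_congr rfl fun y _ => by rw [Finset.mul_sum]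
  rw [swap]
  have step : ∀ x y : Fin n → ZMod 2,
      (-1:ℤ)^((f x + f y).val) * ∑ a : Fin n → ZMod 2, (-1:ℤ)^((dotProduct a (x + y)).val)
      = if y = x then (2^n : ℤ) else 0 := by
    intro x y
    rw [aux_orth_full]
    by_cases h : x + y = 0
    · have hxy : x = y := (aux_addself n x y).mp h
      subst hxy
      rw [if_pos h, if_pos rfl]
      have : f x + f x = 0 := by
        have h2 : ∀ c : ZMod 2, c + c = 0 := by decide
        exact h2 _
      rw [this]
      simp
    · rw [if_neg h, if_neg (fun hyx => h (by rw [hyx]; exact (aux_addself n x x).mpr rfl))]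
      ring
  simp only [step]
  simp [Finset.sum_ite_eq, Finset.card_univ, aux_card]
  ring

lemma aux_even (n : ℕ) (hn : 1 ≤ n) (f : (Fin n → ZMod 2) → ZMod 2)
    (W : (Fin n → ZMod 2) → ℤ)
    (hW : ∀ a, W a = ∑ x : Fin n → ZMod 2, (-1 : ℤ) ^ (f x + dotProduct a x).val)
    (a : Fin n → ZMod 2) : Even (W a) := by
  have hcast : ((W a : ℤ) : ZMod 2) = 0 := by
    rw [hW]
    push_cast
    have h1 : (-1 : ZMod 2) = 1 := by decide
    simp only [h1, one_pow]
    rw [Finset.sum_const, Finset.card_univ, aux_card, nsmul_eq_mul, mul_one]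
    rw [show ((2^n : ℕ) : ZMod 2) = ((2:ℕ) : ZMod 2)^n by push_cast; ring]
    rw [show ((2:ℕ) : ZMod 2) = 0 by decide]
    exact zero_pow (by omega)
  have hdvd : (2:ℤ) ∣ W a := (ZMod.intCast_zmod_eq_zero_iff_dvd (W a) 2).mp hcast
  obtain ⟨k, hk⟩ := hdvd; exact ⟨k, by omega⟩

theorem stmt_13 (n : ℕ) (hn : 2 ≤ n) (hne : Even n) (V : ℤ) (hV : V = 2 ^ (n / 2)) :
    (∀ x : ℤ, Even x → 0 ≤ (x ^ 2 - V ^ 2) * ((x - 2) ^ 2 - V ^ 2)) ∧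
    (∀ f : (Fin n → ZMod 2) → ZMod 2, f 0 = 0 →
      ∀ W : (Fin n → ZMod 2) → ℤ,
        (∀ a, W a = ∑ x : Fin n → ZMod 2,
          (-1 : ℤ) ^ (f x + dotProduct a x).val) →
        2 ^ (3 * n) - 4 * 2 ^ (2 * n) ≤
          ∑ a : Fin n → ZMod 2, ((W a) ^ 4 - 4 * (W a) ^ 3)) := by
  have hk1 : 1 ≤ n / 2 := by omega
  have hVeven : Even V := by
    rw [hV, show n / 2 = (n / 2 - 1) + 1 by omega, pow_succ]
    exact ⟨2 ^ (n/2-1), by ring⟩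
  have hV2le : 2 ≤ V := by
    rw [hV]
    calc (2:ℤ) = 2^1 := by ring
    _ ≤ 2^(n/2) := pow_le_pow_right₀ (by norm_num) hk1
  have part1 : ∀ x : ℤ, Even x → 0 ≤ (x ^ 2 - V ^ 2) * ((x - 2) ^ 2 - V ^ 2) := by
    intro x hx
    have hx2 := Int.even_iff.mp hx
    have hVm := Int.even_iff.mp hVeven
    have tri : x ≤ -V ∨ (-V + 2 ≤ x ∧ x ≤ V) ∨ V + 2 ≤ x := by omega
    rcases tri with h | ⟨h1, h2⟩ | h
    · have f1 : 0 ≤ x^2 - V^2 := by nlinarith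
      have f2 : 0 ≤ (x-2)^2 - V^2 := by nlinarith
      exact mul_nonneg f1 f2
    · have f1 : x^2 - V^2 ≤ 0 := by nlinarith
      have f2 : (x-2)^2 - V^2 ≤ 0 := by nlinarith
      nlinarith [mul_nonneg (neg_nonneg.mpr f1) (neg_nonneg.mpr f2)]
    · have f1 : 0 ≤ x^2 - V^2 := by nlinarith
      have f2 : 0 ≤ (x-2)^2 - V^2 := by nlinarith
      exact mul_nonneg f1 f2
  refine ⟨part1, ?_⟩
  intro f hf W hW
  have hS1 : ∑ a : Fin n → ZMod 2, W a = 2^n := aux_sum1 n f hf W hW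
  have hS2 : ∑ a : Fin n → ZMod 2, (W a)^2 = 2^(2*n) := aux_sum2 n f W hW
  have hH : 0 ≤ ∑ a : Fin n → ZMod 2, ((W a)^2 - V^2) * ((W a - 2)^2 - V^2) :=
    Finset.sum_nonneg fun a _ => part1 (W a) (aux_even n (by omega) f W hW a)
  have split : ∑ a : Fin n → ZMod 2, ((W a)^2 - V^2) * ((W a - 2)^2 - V^2)
      = (∑ a : Fin n → ZMod 2, ((W a)^4 - 4*(W a)^3))
        + (4 - 2*V^2) * (∑ a : Fin n → ZMod 2, (W a)^2)
        + 4*V^2*(∑ a : Fin n → ZMod 2, W a)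
        + (∑ a : Fin n → ZMod 2, (1:ℤ)) * (V^4 - 4*V^2) := by
    rw [Finset.mul_sum, Finset.mul_sum, Finset.sum_mul, ← Finset.sum_add_distrib,
      ← Finset.sum_add_distrib, ← Finset.sum_add_distrib]
    exact Finset.sum_congr rfl fun a _ => by ring
  have hone : ∑ a : Fin n → ZMod 2, (1:ℤ) = 2^n := by
    rw [Finset.sum_const, Finset.card_univ, aux_card]; simp
  have hd : n / 2 * 2 = n := Nat.div_mul_cancel hne.two_dvd
  have hVsq : V^2 = 2^n := by rw [hV, ← pow_mul, hd]
  have hV4 : V^4 = 2^n * 2^n := by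
    have h4 : V^4 = (V^2)^2 := by ring
    rw [h4, hVsq]; ring
  have e2 : (2:ℤ)^(2*n) = 2^n * 2^n := by rw [two_mul, pow_add]
  have e3 : (2:ℤ)^(3*n) = 2^n * 2^n * 2^n := by
    rw [show 3*n = n + n + n by ring, pow_add, pow_add]
  rw [e3, e2]
  rw [hS1, hS2, e2, hone, hVsq, hV4] at split
  rw [hVsq] at hH
  linarith [hH, split]
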